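/- Let n = k·l with k, l ≥ 1, and let X be an ℝⁿ-valued random vector with law P (a probability measure on ℝⁿ ≅ (ℝˡ)ᵏ), admitting a density with respect to Lebesgue measure, and assume KL(P ‖ N(0,Iₙ)) < ∞. With Pᵢ the one-dimensional marginals (1 ≤ i ≤ n), P̄ᵢ the l-dimensional block marginals, and P̄ᵢⱼ the one-dimensional marginals within block i, the total correlation satisfies the additive decomposition KL(P ‖ ⊗ᵢ₌₁ⁿ Pᵢ) = KL(P ‖ ⊗ᵢ₌₁ᵏ P̄ᵢ) + Σᵢ₌₁ᵏ KL(P̄ᵢ ‖ ⊗ⱼ₌₁ˡ P̄ᵢⱼ), i.e. I_d[P] = I_g[P] + I_l[P], and consequently the group-wise KL divergence satisfies Σᵢ₌₁ᵏ KL(P̄ᵢ ‖ N(0,I_l)) = Σᵢ₌₁ᵏ KL(P̄ᵢ ‖ ⊗ⱼ₌₁ˡ P̄ᵢⱼ) + Σᵢ₌₁ⁿ KL(Pᵢ ‖ N(0,1)), i.e. D_g[P] = I_l[P] + D_d[P]. -/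

import Mathlib

open MeasureTheory Real ENNReal

/-- Kullback–Leibler divergence `KL(P‖Q)`, valued in `ℝ≥0∞`:
`∫ log(dP/dQ) dP` when `P ≪ Q` (and the log-likelihood ratio is integrable), `∞` otherwise. -/
noncomputable def klDiv {X : Type*} [MeasurableSpace X] (P Q : Measure X) : ℝ≥0∞ :=
  open scoped Classical in
  if P ≪ Q ∧ Integrable (fun x => Real.log (P.rnDeriv Q x).toReal) P then
    ENNReal.ofReal (∫ x, Real.log (P.rnDeriv Q x).toReal ∂P)
  else ⊤

/-- Standard Gaussian `N(0, Iₙ)` on `ℝⁿ`, as the product of `n` standard Gaussians on `ℝ`. -/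
noncomputable def stdGaussian (n : ℕ) : Measure (Fin n → ℝ) :=
  Measure.pi fun _ => ProbabilityTheory.gaussianReal 0 1

section Auxiliary

universe u
variable {X : Type u} [MeasurableSpace X]

lemma lintegral_pi_prod : ∀ (n : ℕ) (X : Type u) [MeasurableSpace X]
    (μ : Fin n → Measure X) [∀ i, IsProbabilityMeasure (μ i)]
    (f : Fin n → X → ℝ≥0∞) (_ : ∀ i, Measurable (f i)),
    ∫⁻ x, ∏ i, f i (x i) ∂Measure.pi μ = ∏ i, ∫⁻ x, f i x ∂μ i := by
  intro n
  induction n with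
  | zero => intro X _ μ _ f hf; simp
  | succ m ih =>
    intro X _ μ _ f hf
    have h := measurePreserving_piFinSuccAbove μ 0
    have he := (MeasurableEquiv.piFinSuccAbove (fun _ : Fin (m+1) => X) 0).measurableEmbedding
    have hμ : (fun j : Fin m => μ (Fin.succAbove 0 j)) = fun j => μ j.succ := by
      funext j; rw [Fin.succAbove_zero]
    rw [hμ] at h
    have key : ∫⁻ x, ∏ i, f i (x i) ∂Measure.pi μ
        = ∫⁻ z : X × (Fin m → X), f 0 z.1 * ∏ j, f j.succ (z.2 j)
            ∂((μ 0).prod (Measure.pi fun j => μ j.succ)) := by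
      rw [← h.lintegral_comp_emb he]
      refine lintegral_congr fun x => ?_
      simp only [MeasurableEquiv.piFinSuccAbove, MeasurableEquiv.coe_mk, Fin.insertNthEquiv]
      rw [Fin.prod_univ_succ]
      simp [Fin.succAbove_zero, Fin.tail]
    have h1 : AEMeasurable (f 0) (μ 0) := (hf 0).aemeasurable
    have h2 : AEMeasurable (fun y : Fin m → X => ∏ j, f j.succ (y j))
        (Measure.pi fun j => μ j.succ) :=
      (Finset.measurable_prod Finset.univ fun j _ =>
        (hf j.succ).comp (measurable_pi_apply j)).aemeasurable
    rw [key, lintegral_prod_mul h1 h2,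
      ih X (fun j => μ j.succ) (fun j => f j.succ) (fun j => hf j.succ),
      Fin.prod_univ_succ]

lemma pi_withDensity {n : ℕ} (μ : Fin n → Measure X) [∀ i, IsProbabilityMeasure (μ i)]
    (ν : Fin n → Measure X) [∀ i, IsProbabilityMeasure (ν i)]
    (f : Fin n → X → ℝ≥0∞) (hf : ∀ i, Measurable (f i))
    (h : ∀ i, (μ i).withDensity (f i) = ν i) :
    (Measure.pi μ).withDensity (fun x => ∏ i, f i (x i)) = Measure.pi ν := by
  refine (Measure.pi_eq fun s hs => ?_).symm
  have hbox : MeasurableSet (Set.pi Set.univ s) := MeasurableSet.univ_pi hs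
  rw [withDensity_apply _ hbox]
  have : ∫⁻ x in Set.pi Set.univ s, ∏ i, f i (x i) ∂Measure.pi μ
      = ∫⁻ x, ∏ i, (s i).indicator (f i) (x i) ∂Measure.pi μ := by
    rw [← lintegral_indicator hbox]
    refine lintegral_congr fun x => ?_
    by_cases hx : x ∈ Set.pi Set.univ s
    · rw [Set.indicator_of_mem hx]
      exact Finset.prod_congr rfl fun i _ =>
        (Set.indicator_of_mem (hx i (Set.mem_univ i)) _).symm
    · rw [Set.indicator_of_notMem hx]
      rw [Set.mem_univ_pi] at hx
      push_neg at hx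
      obtain ⟨i, hi⟩ := hx
      exact (Finset.prod_eq_zero (Finset.mem_univ i)
        (Set.indicator_of_notMem hi _)).symm
  rw [this, lintegral_pi_prod n X μ (fun i => (s i).indicator (f i))
    (fun i => (hf i).indicator (hs i))]
  refine Finset.prod_congr rfl fun i _ => ?_
  rw [lintegral_indicator (hs i), ← withDensity_apply _ (hs i), h i]

lemma map_eval_pi {n : ℕ} (μ : Fin n → Measure X) [∀ i, IsProbabilityMeasure (μ i)] (i : Fin n) :
    (Measure.pi μ).map (fun x => x i) = μ i := by
  refine Measure.ext fun s hs => ?_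
  rw [Measure.map_apply (measurable_pi_apply i) hs]
  have : (fun x : Fin n → X => x i) ⁻¹' s
      = Set.pi Set.univ (Function.update (fun _ => Set.univ) i s) := by
    ext x
    simp only [Set.mem_preimage, Set.mem_pi, Set.mem_univ, forall_true_left]
    constructor
    · intro hx j
      rcases eq_or_ne j i with rfl | hj
      · simpa using hx
      · simp [Function.update_of_ne hj]
    · intro hx; simpa using hx i
  rw [this, Measure.pi_pi]
  rw [Finset.prod_eq_single i (fun j _ hj => by simp [Function.update_of_ne hj])
    (fun h => absurd (Finset.mem_univ i) h)]
  simp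

lemma pi_absolutelyContinuous {n : ℕ} (μ ν : Fin n → Measure X)
    [∀ i, IsProbabilityMeasure (μ i)] [∀ i, IsProbabilityMeasure (ν i)]
    (h : ∀ i, μ i ≪ ν i) : Measure.pi μ ≪ Measure.pi ν := by
  have := pi_withDensity ν μ (fun i => (μ i).rnDeriv (ν i))
    (fun i => Measure.measurable_rnDeriv _ _)
    (fun i => Measure.withDensity_rnDeriv_eq _ _ (h i))
  rw [← this]
  exact withDensity_absolutelyContinuous _ _

lemma klDiv_of {P Q : Measure X} (h1 : P ≪ Q)
    (h2 : Integrable (fun x => Real.log (P.rnDeriv Q x).toReal) P) :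
    klDiv P Q = ENNReal.ofReal (∫ x, Real.log (P.rnDeriv Q x).toReal ∂P) := by
  rw [klDiv, if_pos ⟨h1, h2⟩]

lemma klDiv_ne_top_iff {P Q : Measure X} :
    klDiv P Q ≠ ⊤ ↔ P ≪ Q ∧ Integrable (fun x => Real.log (P.rnDeriv Q x).toReal) P := by
  rw [klDiv]
  split_ifs with h
  · simpa using h
  · simpa using h

lemma real_mul_max_neg_log_le {t : ℝ} (ht : 0 ≤ t) :
    t * max (-Real.log t) 0 ≤ Real.exp (-1) := by
  rcases eq_or_lt_of_le ht with rfl | ht'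
  · simpa using Real.exp_pos (-1) |>.le
  rcases le_or_gt 0 (Real.log t) with h | h
  · rw [max_eq_right (by linarith)]
    simpa using Real.exp_pos (-1) |>.le
  · rw [max_eq_left (by linarith)]
    have hy : Real.log t⁻¹ ≤ t⁻¹ * Real.exp (-1) := by
      have h1 : Real.log (t⁻¹ * Real.exp (-1)) ≤ t⁻¹ * Real.exp (-1) - 1 :=
        Real.log_le_sub_one_of_pos (by positivity)
      rw [Real.log_mul (by positivity) (Real.exp_ne_zero _), Real.log_exp] at h1
      linarith
    calc t * -Real.log t = t * Real.log t⁻¹ := by rw [Real.log_inv]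
      _ ≤ t * (t⁻¹ * Real.exp (-1)) := mul_le_mul_of_nonneg_left hy ht'.le
      _ = Real.exp (-1) := by field_simp

lemma ennreal_mul_inv_le_one (a : ℝ≥0∞) : a * a⁻¹ ≤ 1 := by
  rcases eq_or_ne a 0 with rfl | h0
  · simp
  rcases eq_or_ne a ⊤ with rfl | ht
  · simp
  · rw [ENNReal.mul_inv_cancel h0 ht]

lemma integrable_min_log_rnDeriv {P Q : Measure X} [IsProbabilityMeasure P]
    [IsProbabilityMeasure Q] (h : P ≪ Q) :
    Integrable (fun x => min (Real.log (P.rnDeriv Q x).toReal) 0) P := by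
  have hm : Measurable fun x => min (Real.log (P.rnDeriv Q x).toReal) 0 :=
    (Real.measurable_log.comp (Measure.measurable_rnDeriv P Q).ennreal_toReal).min
      measurable_const
  refine ⟨hm.aestronglyMeasurable, ?_⟩
  set f := P.rnDeriv Q with hfdef
  have hfm : Measurable f := Measure.measurable_rnDeriv P Q
  have hPrepr : P = Q.withDensity f := (Measure.withDensity_rnDeriv_eq P Q h).symm
  have key : ∫⁻ x, ‖min (Real.log (f x).toReal) 0‖₊ ∂P
      ≤ ENNReal.ofReal (Real.exp (-1)) * Q Set.univ := by
    conv_lhs => rw [hPrepr]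
    rw [lintegral_withDensity_eq_lintegral_mul Q hfm hm.nnnorm.coe_nnreal_ennreal]
    rw [← setLIntegral_univ (μ := Q)]  -- to compare with constant
    calc ∫⁻ x in Set.univ, f x * ‖min (Real.log (f x).toReal) 0‖₊ ∂Q
        ≤ ∫⁻ _ in Set.univ, ENNReal.ofReal (Real.exp (-1)) ∂Q := by
          refine setLIntegral_mono' MeasurableSet.univ fun x _ => ?_
          have hnorm : (‖min (Real.log (f x).toReal) 0‖₊ : ℝ≥0∞)
              = ENNReal.ofReal (max (-Real.log (f x).toReal) 0) := by
            rw [← enorm_eq_nnnorm, ← ofReal_norm, Real.norm_eq_abs]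
            congr 1
            rcases le_or_gt (Real.log (f x).toReal) 0 with hl | hl
            · rw [min_eq_left hl, abs_of_nonpos hl, max_eq_left (by linarith)]
            · rw [min_eq_right hl.le, max_eq_right (by linarith)]
              simp
          rw [hnorm]
          rcases eq_or_ne (f x) ⊤ with hfin | hfin
          · rw [hfin]
            simp
          · nth_rewrite 1 [← ENNReal.ofReal_toReal hfin]
            rw [← ENNReal.ofReal_mul ENNReal.toReal_nonneg]
            exact ENNReal.ofReal_le_ofReal (real_mul_max_neg_log_le ENNReal.toReal_nonneg)
      _ = ENNReal.ofReal (Real.exp (-1)) * Q Set.univ := by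
          rw [setLIntegral_const]
  refine lt_of_le_of_lt key ?_
  rw [measure_univ, mul_one]
  exact ENNReal.ofReal_lt_top

lemma integral_log_rnDeriv_nonneg {P Q : Measure X} [IsProbabilityMeasure P]
    [IsProbabilityMeasure Q] (h : P ≪ Q)
    (hInt : Integrable (fun x => Real.log (P.rnDeriv Q x).toReal) P) :
    0 ≤ ∫ x, Real.log (P.rnDeriv Q x).toReal ∂P := by
  set f := P.rnDeriv Q with hfdef
  have hfm : Measurable f := Measure.measurable_rnDeriv P Q
  have hpos : ∀ᵐ x ∂P, 0 < f x := Measure.rnDeriv_pos h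
  have hfin : ∀ᵐ x ∂P, f x < ⊤ := h.ae_le (Measure.rnDeriv_lt_top P Q)
  -- the inverse of the density is integrable with integral at most 1
  have hinv_meas : Measurable fun x => (f x).toReal⁻¹ :=
    hfm.ennreal_toReal.inv
  have hlint : ∫⁻ x, ENNReal.ofReal (f x).toReal⁻¹ ∂P ≤ 1 := by
    have hcongr : ∀ᵐ x ∂P, ENNReal.ofReal (f x).toReal⁻¹ = (f x)⁻¹ := by
      filter_upwards [hpos, hfin] with x hx1 hx2
      rw [← ENNReal.ofReal_toReal hx2.ne]
      rw [ENNReal.toReal_ofReal ENNReal.toReal_nonneg,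
        ENNReal.ofReal_inv_of_pos (ENNReal.toReal_pos hx1.ne' hx2.ne)]
    rw [lintegral_congr_ae hcongr]
    have hPrepr : P = Q.withDensity f := (Measure.withDensity_rnDeriv_eq P Q h).symm
    conv_lhs => rw [hPrepr]
    rw [lintegral_withDensity_eq_lintegral_mul Q hfm (g := fun x => (f x)⁻¹) hfm.inv]
    calc ∫⁻ x, f x * (f x)⁻¹ ∂Q ≤ ∫⁻ _, 1 ∂Q :=
          lintegral_mono fun x => ennreal_mul_inv_le_one (f x)
      _ = 1 := by rw [lintegral_one, measure_univ]
  have hinv_int : Integrable (fun x => (f x).toReal⁻¹) P := by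
    refine ⟨hinv_meas.aestronglyMeasurable, ?_⟩
    refine lt_of_le_of_lt ?_ (lt_of_le_of_lt hlint one_lt_top)
    refine lintegral_mono fun x => ?_
    rw [← ofReal_norm, Real.norm_eq_abs, abs_of_nonneg (by positivity)]
  have hint_le : ∫ x, (f x).toReal⁻¹ ∂P ≤ 1 := by
    rw [integral_eq_lintegral_of_nonneg_ae (Filter.Eventually.of_forall fun x => by positivity)
      hinv_meas.aestronglyMeasurable]
    calc (∫⁻ x, ENNReal.ofReal (f x).toReal⁻¹ ∂P).toReal ≤ (1 : ℝ≥0∞).toReal :=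
          ENNReal.toReal_mono one_ne_top hlint
      _ = 1 := by simp
  have hptwise : ∀ᵐ x ∂P, 1 - (f x).toReal⁻¹ ≤ Real.log (f x).toReal := by
    filter_upwards [hpos, hfin] with x hx1 hx2
    have ht : 0 < (f x).toReal := ENNReal.toReal_pos hx1.ne' hx2.ne
    have := Real.log_le_sub_one_of_pos (inv_pos.mpr ht)
    rw [Real.log_inv] at this
    linarith
  have hmono : ∫ x, (1 - (f x).toReal⁻¹) ∂P ≤ ∫ x, Real.log (f x).toReal ∂P :=
    integral_mono_ae ((integrable_const (1:ℝ)).sub hinv_int) hInt hptwise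
  rw [integral_sub (integrable_const (1:ℝ)) hinv_int, integral_const, probReal_univ] at hmono
  simp only [ENNReal.toReal_one, smul_eq_mul, one_mul] at hmono
  linarith

lemma log_rnDeriv_decomp {n : ℕ} (ν : Fin n → Measure X) [∀ i, IsProbabilityMeasure (ν i)]
    (P : Measure (Fin n → X)) [IsProbabilityMeasure P] (hP : P ≪ Measure.pi ν) :
    (∀ i, P.map (fun x => x i) ≪ ν i) ∧
    (P ≪ Measure.pi (fun i => P.map (fun x => x i))) ∧
    (fun x => Real.log (P.rnDeriv (Measure.pi ν) x).toReal) =ᵐ[P]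
      (fun x => Real.log (P.rnDeriv (Measure.pi fun i => P.map (fun y => y i)) x).toReal
        + ∑ i, Real.log (((P.map (fun y => y i)).rnDeriv (ν i)) (x i)).toReal) := by
  set Pm : Fin n → Measure X := fun i => P.map (fun y => y i) with hPmdef
  haveI : ∀ i, IsProbabilityMeasure (Pm i) := fun i =>
    Measure.isProbabilityMeasure_map (measurable_pi_apply i).aemeasurable
  set f : Fin n → X → ℝ≥0∞ := fun i => (Pm i).rnDeriv (ν i) with hfdef
  have hf : ∀ i, Measurable (f i) := fun i => Measure.measurable_rnDeriv _ _
  set D : (Fin n → X) → ℝ≥0∞ := fun x => ∏ i, f i (x i) with hDdef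
  have hDm : Measurable D :=
    Finset.measurable_prod Finset.univ fun i _ => (hf i).comp (measurable_pi_apply i)
  have hPm : ∀ i, Pm i ≪ ν i := by
    intro i
    have h1 := hP.map (measurable_pi_apply i)
    rwa [map_eval_pi ν i] at h1
  set Q : Measure (Fin n → X) := Measure.pi Pm with hQdef
  have hQD : (Measure.pi ν).withDensity D = Q :=
    pi_withDensity ν Pm f hf (fun i => Measure.withDensity_rnDeriv_eq _ _ (hPm i))
  have hQν : Q ≪ Measure.pi ν := hQD ▸ withDensity_absolutelyContinuous _ _
  have hfzero : ∀ i, P {x | f i (x i) = 0} = 0 := by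
    intro i
    have hms : MeasurableSet {y : X | f i y = 0} := (hf i) (measurableSet_singleton 0)
    have h1 : P {x | f i (x i) = 0} = Pm i {y | f i y = 0} := by
      rw [hPmdef, Measure.map_apply (measurable_pi_apply i) hms]
      rfl
    rw [h1, ← Measure.withDensity_rnDeriv_eq _ _ (hPm i), withDensity_apply _ hms]
    calc ∫⁻ y in {y | f i y = 0}, f i y ∂ν i
        = ∫⁻ _ in {y | f i y = 0}, 0 ∂ν i :=
          setLIntegral_congr_fun hms (fun y hy => hy)
      _ = 0 := by simp
  have hPZ : P {x | D x = 0} = 0 := by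
    refine measure_mono_null (fun x hx => ?_) ((measure_iUnion_null_iff).mpr hfzero)
    simp only [Set.mem_setOf_eq, hDdef] at hx
    obtain ⟨i, _, hi⟩ := Finset.prod_eq_zero_iff.mp hx
    exact Set.mem_iUnion.mpr ⟨i, hi⟩
  have hPQ : P ≪ Q := by
    intro s hs0
    obtain ⟨t, hst, htm, ht0⟩ := exists_measurable_superset_of_null hs0
    have h1 : ∫⁻ x in t, D x ∂Measure.pi ν = 0 := by
      rw [← withDensity_apply _ htm, hQD]; exact ht0
    have h2 : ∀ᵐ x ∂Measure.pi ν, x ∈ t → D x = 0 :=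
      (setLIntegral_eq_zero_iff htm hDm).mp h1
    have h3 : ∀ᵐ x ∂P, x ∈ t → D x = 0 := hP.ae_le h2
    have h4 : ∀ᵐ x ∂P, D x ≠ 0 := by
      rw [ae_iff]
      simpa using hPZ
    have h5 : ∀ᵐ x ∂P, x ∉ t := by
      filter_upwards [h3, h4] with x hx1 hx2
      exact fun ht => hx2 (hx1 ht)
    exact measure_mono_null hst (measure_eq_zero_iff_ae_notMem.mpr h5)
  refine ⟨hPm, hPQ, ?_⟩
  have hD_rn : Q.rnDeriv (Measure.pi ν) =ᵐ[Measure.pi ν] D := by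
    rw [← hQD]
    exact Measure.rnDeriv_withDensity _ hDm
  have hchain : P.rnDeriv Q * Q.rnDeriv (Measure.pi ν) =ᵐ[Measure.pi ν]
      P.rnDeriv (Measure.pi ν) := Measure.rnDeriv_mul_rnDeriv hPQ
  have hu_pos : ∀ᵐ x ∂P, 0 < P.rnDeriv Q x := Measure.rnDeriv_pos hPQ
  have hu_fin : ∀ᵐ x ∂P, P.rnDeriv Q x < ⊤ := hPQ.ae_le (Measure.rnDeriv_lt_top P Q)
  have hf_pos : ∀ᵐ x ∂P, ∀ i, 0 < f i (x i) := by
    rw [ae_all_iff]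
    intro i
    have : ∀ᵐ x ∂P, f i (x i) ≠ 0 := by
      rw [ae_iff]
      simpa using hfzero i
    filter_upwards [this] with x hx using pos_iff_ne_zero.mpr hx
  have hf_fin : ∀ᵐ x ∂P, ∀ i, f i (x i) < ⊤ := by
    rw [ae_all_iff]
    intro i
    exact ae_of_ae_map (measurable_pi_apply i).aemeasurable
      ((hPm i).ae_le (Measure.rnDeriv_lt_top (Pm i) (ν i)))
  filter_upwards [hP.ae_le hD_rn, hP.ae_le hchain, hu_pos, hu_fin, hf_pos, hf_fin]
    with x hD1 hc hup hufin hfp hff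
  have hDval : D x = ∏ i, f i (x i) := rfl
  have hrn : P.rnDeriv (Measure.pi ν) x = P.rnDeriv Q x * ∏ i, f i (x i) := by
    rw [← hc]
    simp only [Pi.mul_apply]
    rw [hD1]
  rw [hrn, ENNReal.toReal_mul, ENNReal.toReal_prod]
  have hprod_ne : ∏ i, (f i (x i)).toReal ≠ 0 :=
    Finset.prod_ne_zero_iff.mpr fun i _ =>
      (ENNReal.toReal_pos (hfp i).ne' (hff i).ne).ne'
  rw [Real.log_mul (ENNReal.toReal_pos hup.ne' hufin.ne).ne' hprod_ne,
    Real.log_prod fun i _ => (ENNReal.toReal_pos (hfp i).ne' (hff i).ne).ne']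

lemma kl_core {n : ℕ} (ν : Fin n → Measure X) [∀ i, IsProbabilityMeasure (ν i)]
    (P : Measure (Fin n → X)) [IsProbabilityMeasure P]
    (hP : P ≪ Measure.pi ν)
    (hInt : Integrable (fun x => Real.log (P.rnDeriv (Measure.pi ν) x).toReal) P) :
    (∀ i, P.map (fun y => y i) ≪ ν i) ∧
    (P ≪ Measure.pi (fun i => P.map (fun y => y i))) ∧
    Integrable (fun x =>
      Real.log (P.rnDeriv (Measure.pi fun i => P.map (fun y => y i)) x).toReal) P ∧
    (∀ i, Integrable (fun z => Real.log ((P.map (fun y => y i)).rnDeriv (ν i) z).toReal)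
      (P.map (fun y => y i))) ∧
    klDiv P (Measure.pi ν)
      = klDiv P (Measure.pi fun i => P.map (fun y => y i))
        + ∑ i, klDiv (P.map fun y => y i) (ν i) := by
  obtain ⟨hPm, hPQ, hae⟩ := log_rnDeriv_decomp ν P hP
  set Pm : Fin n → Measure X := fun i => P.map (fun y => y i) with hPmdef
  haveI : ∀ i, IsProbabilityMeasure (Pm i) := fun i =>
    Measure.isProbabilityMeasure_map (measurable_pi_apply i).aemeasurable
  set Q : Measure (Fin n → X) := Measure.pi Pm with hQdef
  set f : Fin n → X → ℝ≥0∞ := fun i => (Pm i).rnDeriv (ν i) with hfdef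
  set g : (Fin n → X) → ℝ := fun x => Real.log (P.rnDeriv (Measure.pi ν) x).toReal with hgdef
  set u : (Fin n → X) → ℝ := fun x => Real.log (P.rnDeriv Q x).toReal with hudef
  set h : Fin n → (Fin n → X) → ℝ := fun i x => Real.log (f i (x i)).toReal with hhdef
  have hum : Measurable u :=
    Real.measurable_log.comp (Measure.measurable_rnDeriv P Q).ennreal_toReal
  have hhm : ∀ i, Measurable (h i) := fun i =>
    (Real.measurable_log.comp ((Measure.measurable_rnDeriv _ _).comp
      (measurable_pi_apply i)).ennreal_toReal)
  -- negative parts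
  have hnQ : Integrable (fun x => min (u x) 0) P := integrable_min_log_rnDeriv hPQ
  have hni : ∀ i, Integrable (fun x => min (h i x) 0) P := by
    intro i
    have h1 : Integrable (fun z => min (Real.log (f i z).toReal) 0) (Pm i) :=
      integrable_min_log_rnDeriv (hPm i)
    have hsm : AEStronglyMeasurable (fun z => min (Real.log (f i z).toReal) 0) (Pm i) :=
      ((Real.measurable_log.comp
        (Measure.measurable_rnDeriv _ _).ennreal_toReal).min measurable_const
        ).aestronglyMeasurable
    have h2 : Integrable ((fun z => min (Real.log (f i z).toReal) 0)
        ∘ (fun x : Fin n → X => x i)) P :=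
      (integrable_map_measure hsm (measurable_pi_apply i).aemeasurable).mp h1
    exact h2
  set N : (Fin n → X) → ℝ := fun x => ∑ i, -(min (h i x) 0) with hNdef
  have hNint : Integrable N P := integrable_finset_sum _ fun i _ => (hni i).neg
  have hNnonneg : ∀ x, 0 ≤ N x := fun x =>
    Finset.sum_nonneg fun i _ => neg_nonneg.mpr (min_le_right _ _)
  -- integrability of u
  have hu_int : Integrable u P := by
    refine Integrable.mono' ((hInt.abs.add hNint).add hnQ.neg) hum.aestronglyMeasurable ?_
    filter_upwards [hae] with x hx
    have hsle : ∑ i, min (h i x) 0 ≤ ∑ i, h i x :=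
      Finset.sum_le_sum fun i _ => min_le_left _ _
    have hx' : g x = u x + ∑ i, h i x := hx
    have h1 : u x ≤ |g x| + N x := by
      have : u x = g x - ∑ i, h i x := by linarith
      rw [this, hNdef]
      have : -∑ i, h i x ≤ ∑ i, -(min (h i x) 0) := by
        rw [← Finset.sum_neg_distrib]
        exact Finset.sum_le_sum fun i _ => neg_le_neg (min_le_left _ _)
      have hg := le_abs_self (g x)
      linarith
    have h2 : -u x ≤ -(min (u x) 0) := neg_le_neg (min_le_left _ _)
    rw [Real.norm_eq_abs, abs_le]
    constructor
    · have := abs_nonneg (g x); have := hNnonneg x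
      simp only [Pi.add_apply, Pi.neg_apply]
      linarith
    · have := hNnonneg x
      have h3 : (0:ℝ) ≤ -(min (u x) 0) := neg_nonneg.mpr (min_le_right _ _)
      simp only [Pi.add_apply, Pi.neg_apply]
      linarith [h1]
  have hS : Integrable (fun x => g x - u x) P := hInt.sub hu_int
  -- integrability of each h i
  have hhi_int : ∀ i, Integrable (h i) P := by
    intro i
    refine Integrable.mono' (hS.abs.add hNint) (hhm i).aestronglyMeasurable ?_
    filter_upwards [hae] with x hx
    have hx' : g x = u x + ∑ j, h j x := hx
    have hsum : ∑ j, h j x = g x - u x := by linarith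
    have key : h i x - min (h i x) 0 ≤ ∑ j, (h j x - min (h j x) 0) :=
      Finset.single_le_sum (f := fun j => h j x - min (h j x) 0)
        (fun j _ => sub_nonneg.mpr (min_le_left _ _)) (Finset.mem_univ i)
    have hsum2 : ∑ j, (h j x - min (h j x) 0) = (g x - u x) + N x := by
      rw [Finset.sum_sub_distrib, hsum, hNdef]
      simp only [Finset.sum_neg_distrib]
      ring
    have hmin_le : -(min (h i x) 0) ≤ N x :=
      Finset.single_le_sum (f := fun j => -(min (h j x) 0))
        (fun j _ => neg_nonneg.mpr (min_le_right _ _)) (Finset.mem_univ i)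
    rw [Real.norm_eq_abs, abs_le]
    have habs := le_abs_self (g x - u x)
    have habs2 := neg_abs_le (g x - u x)
    have hmin0 : min (h i x) 0 ≤ 0 := min_le_right _ _
    have hge : min (h i x) 0 ≤ h i x := min_le_left _ _
    constructor
    · simp only [Pi.add_apply]
      have := hNnonneg x
      nlinarith [key, hsum2]
    · simp only [Pi.add_apply]
      linarith
  -- transfer to the marginal measures
  have hhi_marg : ∀ i, Integrable (fun z => Real.log ((Pm i).rnDeriv (ν i) z).toReal) (Pm i) := by
    intro i
    have hsm : AEStronglyMeasurable (fun z => Real.log ((Pm i).rnDeriv (ν i) z).toReal) (Pm i) :=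
      (Real.measurable_log.comp
        (Measure.measurable_rnDeriv _ _).ennreal_toReal).aestronglyMeasurable
    exact (integrable_map_measure hsm (measurable_pi_apply i).aemeasurable).mpr (hhi_int i)
  have hQInt : Integrable (fun x => Real.log (P.rnDeriv Q x).toReal) P := hu_int
  refine ⟨hPm, hPQ, hu_int, hhi_marg, ?_⟩
  -- the integral identity
  have hmarg_eq : ∀ i, ∫ x, h i x ∂P = ∫ z, Real.log ((Pm i).rnDeriv (ν i) z).toReal ∂Pm i := by
    intro i
    rw [hPmdef]
    exact (integral_map (measurable_pi_apply i).aemeasurable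
      ((Real.measurable_log.comp
        (Measure.measurable_rnDeriv _ _).ennreal_toReal).aestronglyMeasurable)).symm
  have hint_eq : ∫ x, g x ∂P = ∫ x, u x ∂P + ∑ i, ∫ z,
      Real.log ((Pm i).rnDeriv (ν i) z).toReal ∂Pm i := by
    rw [integral_congr_ae hae, integral_add hu_int (integrable_finset_sum _ fun i _ => hhi_int i),
      integral_finset_sum _ fun i _ => hhi_int i]
    congr 1
    exact Finset.sum_congr rfl fun i _ => hmarg_eq i
  have hu_nonneg : 0 ≤ ∫ x, u x ∂P := integral_log_rnDeriv_nonneg hPQ hu_int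
  have hhi_nonneg : ∀ i, 0 ≤ ∫ z, Real.log ((Pm i).rnDeriv (ν i) z).toReal ∂Pm i := fun i =>
    integral_log_rnDeriv_nonneg (hPm i) (hhi_marg i)
  rw [klDiv_of hP hInt]
  have hkli : ∀ i, klDiv (Pm i) (ν i)
      = ENNReal.ofReal (∫ z, Real.log ((Pm i).rnDeriv (ν i) z).toReal ∂Pm i) := fun i =>
    klDiv_of (hPm i) (hhi_marg i)
  calc ENNReal.ofReal (∫ x, g x ∂P)
      = ENNReal.ofReal (∫ x, u x ∂P + ∑ i, ∫ z,
          Real.log ((Pm i).rnDeriv (ν i) z).toReal ∂Pm i) := by rw [hint_eq]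
    _ = ENNReal.ofReal (∫ x, u x ∂P) + ENNReal.ofReal (∑ i, ∫ z,
          Real.log ((Pm i).rnDeriv (ν i) z).toReal ∂Pm i) :=
        ENNReal.ofReal_add hu_nonneg (Finset.sum_nonneg fun i _ => hhi_nonneg i)
    _ = ENNReal.ofReal (∫ x, u x ∂P) + ∑ i, ENNReal.ofReal (∫ z,
          Real.log ((Pm i).rnDeriv (ν i) z).toReal ∂Pm i) := by
        rw [ENNReal.ofReal_sum_of_nonneg fun i _ => hhi_nonneg i]
    _ = klDiv P Q + ∑ i, klDiv (Pm i) (ν i) := by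
        have hsumeq : ∑ i, ENNReal.ofReal (∫ z, Real.log ((Pm i).rnDeriv (ν i) z).toReal ∂Pm i)
            = ∑ i, klDiv (Pm i) (ν i) := Finset.sum_congr rfl fun i _ => (hkli i).symm
        rw [hsumeq, klDiv_of hPQ hQInt]

end Auxiliary

/-- Additivity of the total correlation across a grouping of the coordinates
(`I_d = I_g + I_l`), and the induced decomposition of the group-wise KL divergence
(`D_g = I_l + D_d`). -/
theorem totalCorrelation_group_decomposition {k l : ℕ} (hk : 1 ≤ k) (hl : 1 ≤ l)
    (P : Measure (Fin k → Fin l → ℝ)) [IsProbabilityMeasure P]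
    (hac : P ≪ (volume : Measure (Fin k → Fin l → ℝ)))
    (hfin : klDiv P (Measure.pi fun _ : Fin k => stdGaussian l) ≠ ⊤) :
    klDiv P (Measure.pi fun i => Measure.pi fun j => P.map fun x => x i j) =
      klDiv P (Measure.pi fun i => P.map fun x => x i) +
        ∑ i : Fin k, klDiv (P.map fun x => x i)
          (Measure.pi fun j => P.map fun x => x i j) ∧
    (∑ i : Fin k, klDiv (P.map fun x => x i) (stdGaussian l)) =
      (∑ i : Fin k, klDiv (P.map fun x => x i)
        (Measure.pi fun j => P.map fun x => x i j)) +
        ∑ i : Fin k, ∑ j : Fin l,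
          klDiv (P.map fun x => x i j) (ProbabilityTheory.gaussianReal 0 1) := by
  haveI : IsProbabilityMeasure (stdGaussian l) := by
    unfold stdGaussian; infer_instance
  haveI hPmInst : ∀ i : Fin k, IsProbabilityMeasure (P.map fun x => x i) := fun i =>
    Measure.isProbabilityMeasure_map (measurable_pi_apply i).aemeasurable
  haveI hPmijInst : ∀ (i : Fin k) (j : Fin l), IsProbabilityMeasure (P.map fun x => x i j) :=
    fun i j => Measure.isProbabilityMeasure_map
      (((measurable_pi_apply j).comp (measurable_pi_apply i))).aemeasurable
  rw [klDiv_ne_top_iff] at hfin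
  obtain ⟨hPG, hIntG⟩ := hfin
  -- the group-level decomposition against the Gaussian reference
  obtain ⟨hPmG, hPQ, hQint, hmargint, hA⟩ := kl_core (fun _ : Fin k => stdGaussian l) P hPG hIntG
  -- map-map identification of within-group marginals
  have hmap : ∀ (i : Fin k) (j : Fin l),
      (P.map fun x => x i).map (fun y => y j) = P.map fun x => x i j := fun i j =>
    Measure.map_map (measurable_pi_apply j) (measurable_pi_apply i)
  -- within-group decompositions
  have hB : ∀ i : Fin k,
      (P.map (fun x => x i) ≪ Measure.pi (fun j => P.map fun x => x i j)) ∧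
      Integrable (fun z => Real.log (((P.map fun x => x i)).rnDeriv
        (Measure.pi fun j => P.map fun x => x i j) z).toReal) (P.map fun x => x i) ∧
      klDiv (P.map fun x => x i) (stdGaussian l)
        = klDiv (P.map fun x => x i) (Measure.pi fun j => P.map fun x => x i j)
          + ∑ j : Fin l, klDiv (P.map fun x => x i j) (ProbabilityTheory.gaussianReal 0 1) := by
    intro i
    have hac_i : (P.map fun x => x i) ≪ Measure.pi (fun _ : Fin l =>
        ProbabilityTheory.gaussianReal 0 1) := hPmG i
    have hint_i : Integrable (fun z => Real.log ((P.map fun x => x i).rnDeriv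
        (Measure.pi fun _ : Fin l => ProbabilityTheory.gaussianReal 0 1) z).toReal)
        (P.map fun x => x i) := hmargint i
    obtain ⟨_, hac2, hint2, _, heq⟩ :=
      kl_core (fun _ : Fin l => ProbabilityTheory.gaussianReal 0 1) (P.map fun x => x i)
        hac_i hint_i
    have hfuneq : (fun j => (P.map fun x => x i).map (fun y => y j))
        = fun j => P.map fun x => x i j := funext fun j => hmap i j
    rw [hfuneq] at hac2 hint2
    simp only [hmap i, hfuneq] at heq
    exact ⟨hac2, hint2, heq⟩
  constructor
  · -- first identity
    set ν' : Fin k → Measure (Fin l → ℝ) :=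
      (fun i => Measure.pi fun j => P.map fun x => x i j) with hν'def
    haveI : ∀ i, IsProbabilityMeasure (ν' i) := fun i => by
      rw [hν'def]; infer_instance
    have hACν' : P ≪ Measure.pi ν' :=
      hPQ.trans (pi_absolutelyContinuous _ _ fun i => (hB i).1)
    obtain ⟨_, _, hae'⟩ := log_rnDeriv_decomp ν' P hACν'
    have hIntν' : Integrable
        (fun x => Real.log (P.rnDeriv (Measure.pi ν') x).toReal) P := by
      have hpiece : ∀ i : Fin k, Integrable
          (fun x : Fin k → Fin l → ℝ =>
            Real.log (((P.map fun y => y i)).rnDeriv (ν' i) (x i)).toReal) P := by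
        intro i
        have hsm : AEStronglyMeasurable
            (fun z => Real.log (((P.map fun y => y i)).rnDeriv (ν' i) z).toReal)
            (P.map fun y => y i) :=
          (Real.measurable_log.comp
            (Measure.measurable_rnDeriv _ _).ennreal_toReal).aestronglyMeasurable
        have h2 : Integrable ((fun z =>
            Real.log (((P.map fun y => y i)).rnDeriv (ν' i) z).toReal)
            ∘ (fun x : Fin k → Fin l → ℝ => x i)) P :=
          (integrable_map_measure hsm (measurable_pi_apply i).aemeasurable).mp ((hB i).2.1)
        exact h2
      have hRHS : Integrable (fun x =>
          Real.log (P.rnDeriv (Measure.pi fun i => P.map (fun y => y i)) x).toReal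
            + ∑ i, Real.log (((P.map (fun y => y i)).rnDeriv (ν' i)) (x i)).toReal) P :=
        hQint.add (integrable_finset_sum _ fun i _ => hpiece i)
      exact hRHS.congr hae'.symm
    obtain ⟨_, _, _, _, hfinal⟩ := kl_core ν' P hACν' hIntν'
    exact hfinal
  · -- second identity
    rw [← Finset.sum_add_distrib]
    exact Finset.sum_congr rfl fun i _ => (hB i).2.2
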